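/- In the symmetric (orthogonal) case, the partial transpose Q = P^{t₁} = Σ_{i,j} τ(E_{ij}) ⊗ E_{ji} satisfies Q = Σ_{k,l∈ℤ_N} (ω^{-k}/N) A_{-k,l} ⊗ A_{-k,-l}, where τ(E_{ij}) = E_{N-1-j,N-1-i}. -/

import Mathlib

open Matrix BigOperators

/-- `ω = exp(2πi/N)`, a primitive N-th root of unity. -/
noncomputable def omegaN (N : ℕ) : ℂ := Complex.exp (2 * Real.pi * Complex.I / N)

/-- `ω^m` for `m ∈ ℤ/N` (well defined since `ω^N = 1`). -/
noncomputable def wpow (N : ℕ) (m : ZMod N) : ℂ := omegaN N ^ m.val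

/-- Matrix unit `E_{a b}` in `Mat_N(ℂ)` with indices in `ℤ/N`. -/
def EU (N : ℕ) [NeZero N] (a b : ZMod N) : Matrix (ZMod N) (ZMod N) ℂ :=
  Matrix.single a b 1

/-- Principal basis element `A_{i j} = Σ_k ω^{k i} E_{k, k+j}`. -/
noncomputable def Apr (N : ℕ) [NeZero N] (i j : ZMod N) : Matrix (ZMod N) (ZMod N) ℂ :=
  ∑ k : ZMod N, wpow N (k * i) • EU N k (k + j)

open Kronecker

/-- Anti-diagonal transpose `τ(E_{ij}) = E_{N-1-j, N-1-i}`. -/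
def tau1 (N : ℕ) (X : Matrix (ZMod N) (ZMod N) ℂ) : Matrix (ZMod N) (ZMod N) ℂ :=
  Matrix.of fun a b => X (-1 - b) (-1 - a)

lemma hprim (N : ℕ) [NeZero N] : IsPrimitiveRoot (omegaN N) N :=
  Complex.isPrimitiveRoot_exp N (NeZero.ne N)

lemma omegaN_pow_N (N : ℕ) [NeZero N] : omegaN N ^ N = 1 := (hprim N).pow_eq_one

lemma wpow_add (N : ℕ) [NeZero N] (x y : ZMod N) :
    wpow N (x + y) = wpow N x * wpow N y := by
  simp only [wpow, ZMod.val_add, ← pow_eq_pow_mod _ (omegaN_pow_N N), pow_add]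

lemma wpow_eq_one_iff (N : ℕ) [NeZero N] (t : ZMod N) : wpow N t = 1 ↔ t = 0 := by
  rw [wpow, (hprim N).pow_eq_one_iff_dvd, Nat.dvd_iff_mod_eq_zero,
    Nat.mod_eq_of_lt (ZMod.val_lt t), ZMod.val_eq_zero]

lemma wpow_mul_val (N : ℕ) [NeZero N] (t k : ZMod N) :
    wpow N (t * k) = (wpow N t) ^ k.val := by
  simp only [wpow, ZMod.val_mul, ← pow_eq_pow_mod _ (omegaN_pow_N N), pow_mul]

lemma wpow_sum (N : ℕ) [NeZero N] (t : ZMod N) :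
    ∑ k : ZMod N, wpow N (t * k) = if t = 0 then (N : ℂ) else 0 := by
  split_ifs with h
  · subst h; simp [wpow, ZMod.card]
  · simp only [wpow_mul_val]
    have hb : ∑ k : ZMod N, (wpow N t) ^ k.val = ∑ i ∈ Finset.range N, (wpow N t) ^ i :=
      Finset.sum_nbij' (fun k => k.val) (fun i => (i : ZMod N))
        (fun a _ => Finset.mem_range.mpr a.val_lt)
        (fun b hb => Finset.mem_univ _)
        (fun a _ => ZMod.natCast_zmod_val a)
        (fun b hb => ZMod.val_natCast_of_lt (Finset.mem_range.mp hb))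
        (fun a _ => rfl)
    have h1 : wpow N t ≠ 1 := fun hh => h ((wpow_eq_one_iff N t).mp hh)
    have hN : (wpow N t) ^ N = 1 := by
      rw [wpow, ← pow_mul, mul_comm, pow_mul, omegaN_pow_N, one_pow]
    rw [hb, geom_sum_eq h1, hN, sub_self, zero_div]

lemma Apr_apply (N : ℕ) [NeZero N] (i j a c : ZMod N) :
    Apr N i j a c = if c = a + j then wpow N (a * i) else 0 := by
  simp only [Apr, Matrix.sum_apply, Matrix.smul_apply, EU, Matrix.single,
    Matrix.of_apply, smul_eq_mul, mul_ite, mul_one, mul_zero]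
  rw [Finset.sum_eq_single a]
  · simp [eq_comm]
  · intro b _ hb
    simp only [ite_eq_right_iff, and_imp]
    intro h; exact absurd h hb
  · simp

/-- In the symmetric case, the partial transpose `Q = Σ_{i,j} τ(E_{ij}) ⊗ E_{ji}` equals
`Σ_{k,l} (ω^{-k}/N) A_{-k,l} ⊗ A_{-k,-l}`. -/
theorem partial_transpose_principal_decomposition (N : ℕ) [NeZero N] :
    ∑ i : ZMod N, ∑ j : ZMod N, tau1 N (EU N i j) ⊗ₖ EU N j i =
      ∑ k : ZMod N, ∑ l : ZMod N, (wpow N (-k) / N) • (Apr N (-k) l ⊗ₖ Apr N (-k) (-l)) := by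
  ext ⟨a, b⟩ ⟨c, d⟩
  have hNC : (N : ℂ) ≠ 0 := Nat.cast_ne_zero.mpr (NeZero.ne N)
  -- LHS
  have hL : (∑ i : ZMod N, ∑ j : ZMod N, tau1 N (EU N i j) ⊗ₖ EU N j i) (a, b) (c, d)
      = if b = -1 - a ∧ d = -1 - c then 1 else 0 := by
    simp only [Matrix.sum_apply, Matrix.kroneckerMap_apply]
    calc ∑ i : ZMod N, ∑ j : ZMod N, tau1 N (EU N i j) a c * EU N j i b d
        = ∑ i : ZMod N, ∑ j : ZMod N,
            (if i = d ∧ j = b then (if b = -1 - a ∧ d = -1 - c then (1:ℂ) else 0) else 0) := by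
          refine Finset.sum_congr rfl fun i _ => Finset.sum_congr rfl fun j _ => ?_
          simp only [tau1, EU, Matrix.single, Matrix.of_apply]
          split_ifs <;> simp_all
      _ = if b = -1 - a ∧ d = -1 - c then 1 else 0 := by
          simp [ite_and, Finset.sum_ite_eq']
  rw [hL]
  -- RHS
  simp only [Matrix.sum_apply, Matrix.smul_apply, Matrix.kroneckerMap_apply, Apr_apply,
    smul_eq_mul]
  have hterm : ∀ k l : ZMod N,
      wpow N (-k) / N * ((if c = a + l then wpow N (a * -k) else 0) *
        (if d = b + -l then wpow N (b * -k) else 0))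
      = if l = c - a then
          (if d = b + -(c - a) then wpow N ((1 + a + b) * -k) / N else 0) else 0 := by
    intro k l
    have key : wpow N ((1 + a + b) * -k) = wpow N (-k) * (wpow N (a * -k) * wpow N (b * -k)) := by
      rw [show (1 + a + b) * -k = -k + (a * -k + b * -k) by ring, wpow_add, wpow_add]
    by_cases h3 : l = c - a
    · subst h3
      have h1 : c = a + (c - a) := by ring
      by_cases h4 : d = b + -(c - a)
      · rw [if_pos h1, if_pos h4, if_pos rfl, if_pos h4, key]; ring
      · rw [if_neg h4, if_pos rfl, if_neg h4, mul_zero, mul_zero]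
    · have h1 : ¬ c = a + l := fun h => h3 (by rw [h]; ring)
      rw [if_neg h1, if_neg h3, zero_mul, mul_zero]
  rw [Finset.sum_congr rfl fun (k : ZMod N) _ => Finset.sum_congr rfl fun (l : ZMod N) _ => hterm k l]
  simp only [Finset.sum_ite_eq', Finset.mem_univ, if_true]
  rw [show (∑ x : ZMod N, if d = b + -(c - a) then wpow N ((1 + a + b) * -x) / N else 0)
      = if d = b + -(c - a) then (∑ x : ZMod N, wpow N ((1 + a + b) * -x)) / N else 0 by
    split_ifs with h
    · rw [Finset.sum_div]
    · simp]
  rw [show (∑ x : ZMod N, wpow N ((1 + a + b) * -x)) = ∑ x : ZMod N, wpow N ((1 + a + b) * x) from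
    Fintype.sum_equiv (Equiv.neg (ZMod N)) _ _ (fun x => by simp), wpow_sum]
  by_cases hb : b = -1 - a
  · by_cases hd : d = -1 - c
    · have hcond : d = b + -(c - a) := by rw [hb, hd]; ring
      have ht : 1 + a + b = 0 := by rw [hb]; ring
      rw [if_pos ⟨hb, hd⟩, if_pos hcond, if_pos ht, div_self hNC]
    · have hcond : ¬ d = b + -(c - a) := fun h => hd (by rw [h, hb]; ring)
      rw [if_neg (fun h => hd h.2), if_neg hcond]
  · have ht : ¬ (1 + a + b = 0) := fun h => hb (by linear_combination h)
    rw [if_neg (fun h => hb h.1), if_neg ht]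
    split_ifs <;> simp
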